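/- For every integer m ≥ 2, the set {n ∈ ℤ : n ≥ 2m and J̃(n,m) is not maximal as an m-distance set in H(n,m)} is nonempty and its maximum equals (2·⌊2(m+1)/3⌋ − 1)². -/

import Mathlib

noncomputable section

/-- The set of distances between distinct points of `S`. -/
def distSet {n : ℕ} (S : Set (EuclideanSpace ℝ (Fin n))) : Set ℝ :=
  {d | ∃ x ∈ S, ∃ y ∈ S, x ≠ y ∧ d = dist x y}

/-- `S` is an `s`-distance set: exactly `s` distances occur between distinct points. -/
def IsSDistanceSet {n : ℕ} (s : ℕ) (S : Set (EuclideanSpace ℝ (Fin n))) : Prop :=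
  (distSet S).Finite ∧ (distSet S).ncard = s

/-- The representation `J̃(n,m)` of the Johnson graph `J(n,m)`: vectors with exactly `m`
coordinates equal to `1` and the rest equal to `0`. -/
def JohnsonRep (n m : ℕ) : Set (EuclideanSpace ℝ (Fin n)) :=
  {x | (∀ i, x i = 0 ∨ x i = 1) ∧ {i : Fin n | x i = 1}.ncard = m}

/-- The hyperplane `H(n,m) = {x : ∑ x_i = m}`. -/
def Hyp (n m : ℕ) : Set (EuclideanSpace ℝ (Fin n)) :=
  {x | ∑ i, x i = (m : ℝ)}

/-- `J̃(n,m)` is maximal as an `m`-distance set in the hyperplane `H(n,m)`. -/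
def JohnsonRepMaximal (n m : ℕ) : Prop :=
  ¬∃ y ∈ Hyp n m \ JohnsonRep n m, IsSDistanceSet m (JohnsonRep n m ∪ {y})


namespace JProof

variable {n m : ℕ}

/-- Johnson point of a finset -/
def jp {n : ℕ} (A : Finset (Fin n)) : EuclideanSpace ℝ (Fin n) := WithLp.toLp 2 (fun i => if i ∈ A then 1 else 0)

lemma jp_mem {A : Finset (Fin n)} (hA : A.card = m) : jp A ∈ JohnsonRep n m := by
  constructor
  · intro i; by_cases h : i ∈ A <;> simp [jp, h]
  · have : {i : Fin n | jp A i = 1} = (A : Set (Fin n)) := by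
      ext i; by_cases h : i ∈ A <;> simp [jp, h]
    rw [this, Set.ncard_coe_finset, hA]

lemma mem_johnsonRep_iff {x : EuclideanSpace ℝ (Fin n)} :
    x ∈ JohnsonRep n m ↔ ∃ A : Finset (Fin n), A.card = m ∧ x = jp A := by
  constructor
  · rintro ⟨h01, hcard⟩
    refine ⟨Finset.univ.filter (fun i => x i = 1), ?_, ?_⟩
    · have : {i : Fin n | x i = 1} = ↑(Finset.univ.filter (fun i => x i = 1)) := by
        ext i; simp
      rw [this, Set.ncard_coe_finset] at hcard
      exact hcard
    · ext i
      rcases h01 i with h | h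
      · have : x i ≠ 1 := by rw [h]; norm_num
        simp [jp, h, this]
      · simp [jp, h]
  · rintro ⟨A, hA, rfl⟩; exact jp_mem hA

lemma dist_sq (x y : EuclideanSpace ℝ (Fin n)) : dist x y ^ 2 = ∑ i, (x i - y i) ^ 2 := by
  rw [EuclideanSpace.dist_eq, Real.sq_sqrt (by positivity)]
  congr 1; ext i; rw [Real.dist_eq, sq_abs]

lemma dist_y_jp (y : EuclideanSpace ℝ (Fin n)) (A : Finset (Fin n)) :
    dist y (jp A) ^ 2 = (∑ i, (y i) ^ 2) + A.card - 2 * ∑ i ∈ A, y i := by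
  rw [dist_sq]
  have : ∀ i, (y i - jp A i) ^ 2 = y i ^ 2 - 2 * (if i ∈ A then y i else 0)
      + (if i ∈ A then (1:ℝ) else 0) := by
    intro i; by_cases h : i ∈ A <;> simp [jp, h] <;> ring
  rw [Finset.sum_congr rfl (fun i _ => this i)]
  rw [Finset.sum_add_distrib, Finset.sum_sub_distrib, ← Finset.mul_sum]
  simp [Finset.sum_ite_mem]
  ring

lemma sum_jp_sq (A : Finset (Fin n)) : (∑ i, (jp A i) ^ 2) = (A.card : ℝ) := by
  have : ∀ i, (jp A i : ℝ) ^ 2 = (if i ∈ A then (1:ℝ) else 0) := by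
    intro i; by_cases h : i ∈ A <;> simp [jp, h]
  rw [Finset.sum_congr rfl (fun i _ => this i)]
  simp [Finset.sum_ite_mem]

lemma sum_jp_over (A B : Finset (Fin n)) : (∑ i ∈ B, jp A i) = ((A ∩ B).card : ℝ) := by
  have : ∀ i ∈ B, jp A i = (if i ∈ A then (1:ℝ) else 0) := by intro i _; rfl
  rw [Finset.sum_congr rfl this, Finset.sum_ite_mem]
  simp [Finset.inter_comm]

lemma dist_jp_jp {A B : Finset (Fin n)} (hA : A.card = m) (hB : B.card = m) :
    dist (jp A) (jp B) ^ 2 = 2 * ((m : ℝ) - (A ∩ B).card) := by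
  rw [dist_y_jp, sum_jp_sq, sum_jp_over, hA, hB]
  ring

lemma jp_inj {A B : Finset (Fin n)} (h : jp A = jp B) : A = B := by
  ext i
  have := congrArg (fun v => v i) h; simp only [jp, PiLp.toLp_apply] at this
  by_cases hA : i ∈ A <;> by_cases hB : i ∈ B <;> simp_all [jp]

end JProof

namespace JProof
variable {n m : ℕ}
open Finset

/-- the target distance set {√(2k) : 1 ≤ k ≤ m} -/
def Dset (m : ℕ) : Set ℝ := (fun k : ℕ => Real.sqrt (2 * k)) '' (Set.Icc 1 m)

lemma Dset_finite : (Dset m).Finite := (Set.finite_Icc 1 m).image _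

lemma Dset_ncard : (Dset m).ncard = m := by
  rw [Dset, Set.ncard_image_of_injOn, ← Finset.coe_Icc, Set.ncard_coe_finset, Nat.card_Icc]
  · omega
  · intro a _ b _ hab
    have h2a : (0:ℝ) ≤ 2 * a := by positivity
    have h2b : (0:ℝ) ≤ 2 * b := by positivity
    have : (2:ℝ) * a = 2 * b := (Real.sqrt_inj h2a h2b).mp hab
    have : (a : ℝ) = b := by linarith
    exact_mod_cast this

lemma dist_eq_sqrt {x y : EuclideanSpace ℝ (Fin n)} {c : ℝ} (h : dist x y ^ 2 = c) :
    dist x y = Real.sqrt c := by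
  rw [← h, Real.sqrt_sq dist_nonneg]

lemma distSet_johnson (hm : 1 ≤ m) (hn : 2 * m ≤ n) :
    distSet (JohnsonRep n m) = Dset m := by
  apply Set.Subset.antisymm
  · rintro d ⟨x, hx, y, hy, hxy, rfl⟩
    rcases mem_johnsonRep_iff.mp hx with ⟨A, hA, rfl⟩
    rcases mem_johnsonRep_iff.mp hy with ⟨B, hB, rfl⟩
    have hAB : A ≠ B := fun h => hxy (by rw [h])
    have hlt : (A ∩ B).card < m := by
      rcases lt_or_eq_of_le (le_trans (Finset.card_le_card (Finset.inter_subset_left)) hA.le) with h | h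
      · exact h
      · exfalso
        have h1 : A ∩ B = A := Finset.eq_of_subset_of_card_le Finset.inter_subset_left (by omega)
        have h2 : A ⊆ B := by rw [← h1]; exact Finset.inter_subset_right
        exact hAB (Finset.eq_of_subset_of_card_le h2 (by omega))
    refine ⟨m - (A ∩ B).card, ⟨by omega, by omega⟩, ?_⟩
    show Real.sqrt _ = _
    rw [dist_eq_sqrt (dist_jp_jp hA hB)]
    congr 1
    push_cast [Nat.cast_sub hlt.le]
    ring
  · rintro d ⟨k, ⟨hk1, hk2⟩, rfl⟩
    have hA' : ∀ a ∈ Finset.range m, a < n := fun a ha => by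
      simp at ha; omega
    have hB' : ∀ a ∈ Finset.Ico k (m + k), a < n := fun a ha => by
      simp at ha; omega
    set A := (Finset.range m).attachFin hA' with hAdef
    set B := ((Finset.Ico k (m + k)).attachFin hB') with hBdef
    have hA : A.card = m := by rw [hAdef, Finset.card_attachFin, Finset.card_range]
    have hB : B.card = m := by rw [hBdef, Finset.card_attachFin, Nat.card_Ico]; omega
    have hint : (A ∩ B).card = m - k := by
      have : A ∩ B = (Finset.Ico k m).attachFin (fun a ha => by simp at ha; omega) := by
        ext i
        simp only [hAdef, hBdef, Finset.mem_inter, Finset.mem_attachFin, Finset.mem_range,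
          Finset.mem_Ico]
        omega
      rw [this, Finset.card_attachFin, Nat.card_Ico]
    have hne : jp A ≠ jp B := by
      intro h
      have hEq := Finset.ext_iff.mp (jp_inj h) ⟨0, by omega⟩
      simp only [hAdef, hBdef, Finset.mem_attachFin, Finset.mem_range, Finset.mem_Ico] at hEq
      omega
    refine ⟨jp A, jp_mem hA, jp B, jp_mem hB, hne, ?_⟩
    show Real.sqrt _ = _
    symm
    apply dist_eq_sqrt
    rw [dist_jp_jp hA hB, hint]
    push_cast [Nat.cast_sub (by omega : k ≤ m)]
    ring

end JProof

namespace JProof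
variable {n m : ℕ}
open Finset

lemma distSet_mono {S T : Set (EuclideanSpace ℝ (Fin n))} (h : S ⊆ T) : distSet S ⊆ distSet T := by
  rintro d ⟨x, hx, y, hy, hxy, rfl⟩
  exact ⟨x, h hx, y, h hy, hxy, rfl⟩

lemma distSet_union_eq (hm : 1 ≤ m) (hn : 2 * m ≤ n) {y : EuclideanSpace ℝ (Fin n)}
    (hS : IsSDistanceSet m (JohnsonRep n m ∪ {y})) :
    distSet (JohnsonRep n m ∪ {y}) = Dset m := by
  have hsub : Dset m ⊆ distSet (JohnsonRep n m ∪ {y}) := by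
    rw [← distSet_johnson hm hn]
    exact distSet_mono Set.subset_union_left
  exact (Set.eq_of_subset_of_ncard_le hsub (by rw [hS.2, Dset_ncard]) hS.1).symm

lemma forced (hm : 1 ≤ m) (hn : 2 * m ≤ n) {y : EuclideanSpace ℝ (Fin n)}
    (hyJ : y ∉ JohnsonRep n m) (hS : IsSDistanceSet m (JohnsonRep n m ∪ {y}))
    {A : Finset (Fin n)} (hA : A.card = m) :
    ∃ k : ℕ, 1 ≤ k ∧ k ≤ m ∧ dist y (jp A) ^ 2 = 2 * k := by
  have hne : y ≠ jp A := fun h => hyJ (h ▸ jp_mem hA)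
  have hd : dist y (jp A) ∈ distSet (JohnsonRep n m ∪ {y}) :=
    ⟨y, Or.inr rfl, jp A, Or.inl (jp_mem hA), hne, rfl⟩
  rw [distSet_union_eq hm hn hS] at hd
  rcases hd with ⟨k, ⟨hk1, hk2⟩, hk⟩
  refine ⟨k, hk1, hk2, ?_⟩
  rw [← hk, Real.sq_sqrt (by positivity)]

lemma isSDist_of (hm : 1 ≤ m) (hn : 2 * m ≤ n) {y : EuclideanSpace ℝ (Fin n)}
    (hc : ∀ A : Finset (Fin n), A.card = m → dist y (jp A) ∈ Dset m) :
    IsSDistanceSet m (JohnsonRep n m ∪ {y}) := by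
  have hEq : distSet (JohnsonRep n m ∪ {y}) = Dset m := by
    apply Set.Subset.antisymm
    · rintro d ⟨x, hx, x', hx', hne, rfl⟩
      rcases hx with hx | hx <;> rcases hx' with hx' | hx'
      · rw [← distSet_johnson hm hn]
        exact ⟨x, hx, x', hx', hne, rfl⟩
      · rcases mem_johnsonRep_iff.mp hx with ⟨A, hA, rfl⟩
        rw [Set.mem_singleton_iff] at hx'
        subst hx'
        rw [dist_comm]
        exact hc A hA
      · rw [Set.mem_singleton_iff] at hx
        subst hx
        rcases mem_johnsonRep_iff.mp hx' with ⟨A, hA, rfl⟩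
        exact hc A hA
      · rw [Set.mem_singleton_iff] at hx hx'
        exact absurd (hx.trans hx'.symm) hne
    · rw [← distSet_johnson hm hn]
      exact distSet_mono Set.subset_union_left
  exact ⟨hEq ▸ Dset_finite, by rw [hEq, Dset_ncard]⟩

end JProof

set_option maxHeartbeats 1000000 in
lemma endgame (m n : ℕ) (hm : 2 ≤ m) (hn : 2 * m ≤ n)
    (Ep Em F h J k1 k2 : ℤ)
    (hEp : 0 ≤ Ep) (hEm : 0 ≤ Em)
    (hh : h = m + Em - Ep)
    (hk1 : 1 ≤ k1) (hk1m : k1 ≤ m) (hk2 : 1 ≤ k2) (hk2m : k2 ≤ m)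
    (hJd : J = F + m - 2 * Ep - 2 * k1)
    (heq1 : (n : ℤ) * J = h ^ 2)
    (heq2 : (n : ℤ) * (F + m + 2 * Em - 2 * k2) = h ^ 2)
    (hF : Ep + Em ≤ F) (hFpar : (F - Ep - Em) % 2 = 0) :
    n ≤ (2 * (2 * (m + 1) / 3) - 1) ^ 2 := by
  set L : ℕ := 2 * (2 * (m + 1) / 3) - 1 with hL
  clear_value L
  have hnpos : (0 : ℤ) < n := by
    have : 0 < n := by omega
    exact_mod_cast this
  have hsame : F + m + 2 * Em - 2 * k2 = J := mul_left_cancel₀ (ne_of_gt hnpos) (heq2.trans heq1.symm)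
  have hk2k1 : k2 = k1 + Ep + Em := by omega
  have hEsum : Ep + Em ≤ m - 1 := by omega
  have hhge : 1 ≤ h := by omega
  have hJ1 : 1 ≤ J := by
    by_contra hc
    push_neg at hc
    have h1 : (n : ℤ) * J ≤ 0 := mul_nonpos_of_nonneg_of_nonpos hnpos.le (by omega)
    nlinarith
  have hLm : (m : ℤ) ≤ (L : ℤ) := by omega
  have hgoal : (n : ℤ) ≤ (L : ℤ) ^ 2 → n ≤ L ^ 2 := by
    intro hgz; exact_mod_cast hgz
  apply hgoal
  have hJF : F - m + 2 * Em ≤ J := by omega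
  rcases eq_or_lt_of_le hJ1 with hJe | hJ2
  · -- J = 1, n = h^2
    have hn_eq : (n : ℤ) = h ^ 2 := by rw [← heq1, ← hJe, mul_one]
    have hhL : h ≤ (L : ℤ) := by omega
    nlinarith
  · -- 2 ≤ J
    have hhub : h ≤ 2 * (m : ℤ) - 1 := by omega
    have h3h : 3 * h ≤ 4 * (m : ℤ) + J := by omega
    have hJub : J ≤ 2 * (m : ℤ) - 2 := by
      have hnn' : (2 * (m : ℤ)) ≤ (n : ℤ) := by exact_mod_cast hn
      have hJ0 : (0 : ℤ) ≤ J := by omega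
      have h1 := mul_le_mul_of_nonneg_right hnn' hJ0
      have h2 : h ^ 2 ≤ (2 * (m : ℤ) - 1) ^ 2 := by nlinarith
      nlinarith [heq1]
    have hsuff : h ^ 2 ≤ J * (L : ℤ) ^ 2 → (n : ℤ) ≤ (L : ℤ) ^ 2 := by
      intro hs
      have : (n : ℤ) * J ≤ (L : ℤ) ^ 2 * J := by rw [heq1]; linarith [hs]
      exact le_of_mul_le_mul_right this (by omega)
    apply hsuff
    by_cases hm6 : 6 ≤ m
    · have hm6' : (6 : ℤ) ≤ (m : ℤ) := by exact_mod_cast hm6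
      have hL45 : 4 * (m : ℤ) - 5 ≤ 3 * (L : ℤ) := by omega
      have e1 : (0 : ℤ) ≤ 2 * (4 * (m : ℤ) - 5) ^ 2 - (4 * m + 2) ^ 2 := by nlinarith [hm6']
      have e2 : (0 : ℤ) ≤ (2 * (m : ℤ) - 2) * (4 * m - 5) ^ 2 - (6 * m - 2) ^ 2 := by
        nlinarith [mul_nonneg (by linarith : (0:ℤ) ≤ (m:ℤ) - 6)
          (by positivity : (0:ℤ) ≤ 32 * (m:ℤ) ^ 2 + 44 * m + 418)]
      have t1 : (0 : ℤ) ≤ (2 * (m : ℤ) - 2 - J) * (2 * (4 * (m : ℤ) - 5) ^ 2 - (4 * m + 2) ^ 2) :=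
        mul_nonneg (by omega) e1
      have t2 : (0 : ℤ) ≤ (J - 2) * ((2 * (m : ℤ) - 2) * (4 * m - 5) ^ 2 - (6 * m - 2) ^ 2) :=
        mul_nonneg (by omega) e2
      have t3 : (0 : ℤ) ≤ (2 * (m : ℤ) - 4) * ((J - 2) * (2 * (m : ℤ) - 2 - J)) :=
        mul_nonneg (by omega) (mul_nonneg (by omega) (by omega))
      have hid : (2 * (m : ℤ) - 4) * (J * (4 * m - 5) ^ 2 - (4 * m + J) ^ 2) =
          (2 * (m : ℤ) - 2 - J) * (2 * (4 * (m : ℤ) - 5) ^ 2 - (4 * m + 2) ^ 2)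
          + (J - 2) * ((2 * (m : ℤ) - 2) * (4 * m - 5) ^ 2 - (6 * m - 2) ^ 2)
          + (2 * (m : ℤ) - 4) * ((J - 2) * (2 * (m : ℤ) - 2 - J)) := by ring
      have key : (4 * (m : ℤ) + J) ^ 2 ≤ J * (4 * m - 5) ^ 2 := by
        nlinarith [hid, t1, t2, t3, hm6']
      have s1 : (3 * h) ^ 2 ≤ (4 * (m : ℤ) + J) ^ 2 :=
        pow_le_pow_left₀ (by linarith) h3h 2
      have s2 : J * (4 * (m : ℤ) - 5) ^ 2 ≤ J * (3 * (L : ℤ)) ^ 2 := by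
        apply mul_le_mul_of_nonneg_left _ (by omega)
        exact pow_le_pow_left₀ (by linarith) hL45 2
      have r1 : (3 * h) ^ 2 = 9 * h ^ 2 := by ring
      have r2 : (3 * (L : ℤ)) ^ 2 = 9 * (L : ℤ) ^ 2 := by ring
      have r3 : J * (9 * (L : ℤ) ^ 2) = 9 * (J * (L : ℤ) ^ 2) := by ring
      linarith [s1, key, s2]
    · have hm5 : m ≤ 5 := by omega
      have hLv : (L : ℤ) = 2 * (2 * ((m : ℤ) + 1) / 3) - 1 := by omega
      interval_cases m
      · have hL3 : (L : ℤ) = 3 := by omega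
        rw [hL3, pow_two, pow_two]
        interval_cases h <;> omega
      · have hL3 : (L : ℤ) = 3 := by omega
        rw [hL3, pow_two, pow_two]
        interval_cases h <;> omega
      · have hL5 : (L : ℤ) = 5 := by omega
        rw [hL5, pow_two, pow_two]
        interval_cases h <;> omega
      · have hL7 : (L : ℤ) = 7 := by omega
        rw [hL7, pow_two, pow_two]
        interval_cases h <;> omega

namespace JProof
variable {n m : ℕ}
open Finset


lemma par2 (t : ℤ) : 2 ∣ t ^ 2 - t := by
  rcases Int.even_or_odd t with ⟨c, hc⟩ | ⟨c, hc⟩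
  · exact ⟨2 * c ^ 2 - c, by rw [hc]; ring⟩
  · exact ⟨2 * c ^ 2 + c, by rw [hc]; ring⟩

lemma par2' (t : ℤ) : 2 ∣ t ^ 2 + t := by
  have h2 : t ^ 2 + t = (t ^ 2 - t) + 2 * t := by ring
  rw [h2]
  exact dvd_add (par2 t) ⟨t, rfl⟩

set_option maxHeartbeats 1000000 in
lemma upper (hm : 2 ≤ m) (hn : 2 * m ≤ n) (hnot : ¬ JohnsonRepMaximal n m) :
    n ≤ (2 * (2 * (m + 1) / 3) - 1) ^ 2 := by
  rw [JohnsonRepMaximal, not_not] at hnot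
  obtain ⟨y, ⟨hyH, hyJ⟩, hS⟩ := hnot
  have hn0 : 0 < n := by omega
  have ky : ∀ A : Finset (Fin n), A.card = m →
      ∃ k : ℕ, 1 ≤ k ∧ k ≤ m ∧ (∑ i, (y i) ^ 2) + m - 2 * ∑ i ∈ A, y i = 2 * k := by
    intro A hA
    obtain ⟨k, hk1, hk2, hk⟩ := forced (by omega) hn hyJ hS hA
    refine ⟨k, hk1, hk2, ?_⟩
    rw [dist_y_jp, hA] at hk
    linarith [hk]
  have hyH' : ∑ i, y i = (m : ℝ) := hyH
  -- Step 1 : integer differences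
  have hdiff : ∀ i j : Fin n, ∃ d : ℤ, y i - y j = (d : ℝ) := by
    intro i j
    by_cases hij : i = j
    · exact ⟨0, by subst hij; simp⟩
    have hc2 : ({i, j} : Finset (Fin n)).card ≤ 2 := by
      apply le_trans (Finset.card_insert_le i {j})
      simp
    have hcd : m - 1 ≤ (Finset.univ \ ({i, j} : Finset (Fin n))).card := by
      rw [Finset.card_sdiff_of_subset (Finset.subset_univ _), Finset.card_univ, Fintype.card_fin]
      omega
    obtain ⟨T, hTsub, hTcard⟩ := Finset.exists_subset_card_eq hcd
    have hiT : i ∉ T := by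
      intro h
      have := hTsub h
      simp [Finset.mem_sdiff] at this
    have hjT : j ∉ T := by
      intro h
      have := hTsub h
      simp [Finset.mem_sdiff] at this
    have hS1 : (insert i T).card = m := by
      rw [Finset.card_insert_of_notMem hiT, hTcard]; omega
    have hS2 : (insert j T).card = m := by
      rw [Finset.card_insert_of_notMem hjT, hTcard]; omega
    obtain ⟨k1, _, _, e1⟩ := ky _ hS1
    obtain ⟨k2, _, _, e2⟩ := ky _ hS2
    refine ⟨(k2 : ℤ) - (k1 : ℤ), ?_⟩
    rw [Finset.sum_insert hiT] at e1
    rw [Finset.sum_insert hjT] at e2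
    push_cast
    linarith [e1, e2]
  -- Step 2 : minimal coordinate and integer shape
  obtain ⟨i₀, -, hi₀⟩ := Finset.exists_min_image Finset.univ y ⟨⟨0, hn0⟩, Finset.mem_univ _⟩
  have hzex : ∀ i, ∃ d : ℤ, y i - y i₀ = (d : ℝ) := fun i => hdiff i i₀
  choose z hz using hzex
  have hz0 : ∀ i, 0 ≤ z i := by
    intro i
    have h1 : (0 : ℝ) ≤ (z i : ℝ) := by
      rw [← hz i]
      have := hi₀ i (Finset.mem_univ i)
      linarith
    exact_mod_cast h1
  have hyz : ∀ i, y i = y i₀ + (z i : ℝ) := fun i => by linarith [hz i]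
  -- sums over subsets in terms of z
  have hsub_sum : ∀ S : Finset (Fin n), S.card = m →
      ∑ i ∈ S, y i = m * y i₀ + ((∑ i ∈ S, z i : ℤ) : ℝ) := by
    intro S hScard
    rw [Finset.sum_congr rfl (fun i _ => hyz i), Finset.sum_add_distrib, Finset.sum_const, hScard]
    push_cast
    ring
  -- Step 3 : width bound
  have width : ∀ S S' : Finset (Fin n), S.card = m → S'.card = m →
      (∑ i ∈ S', z i) ≤ (∑ i ∈ S, z i) + (m : ℤ) - 1 := by
    intro S S' hScard hS'card
    obtain ⟨k1, hk11, hk1m, e1⟩ := ky S hScard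
    obtain ⟨k2, hk21, hk2m, e2⟩ := ky S' hS'card
    rw [hsub_sum S hScard] at e1
    rw [hsub_sum S' hS'card] at e2
    have hreal : ((∑ i ∈ S', z i : ℤ) : ℝ) ≤ ((∑ i ∈ S, z i : ℤ) : ℝ) + (m : ℝ) - 1 := by
      have hk : (1 : ℝ) ≤ (k2 : ℝ) ∧ (k1 : ℝ) ≤ m := by
        constructor <;> exact_mod_cast (by assumption)
      linarith [e1, e2, hk.1, hk.2]
    exact_mod_cast hreal
  -- Step 4 : the quantile value lam
  have hexlam : ∃ t : ℕ, m ≤ (Finset.univ.filter (fun i => z i ≤ (t : ℤ))).card := by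
    refine ⟨(Finset.univ.sup (fun i => (z i).toNat)), ?_⟩
    have : Finset.univ.filter (fun i => z i ≤ ((Finset.univ.sup (fun i => (z i).toNat) : ℕ) : ℤ))
        = Finset.univ := by
      apply Finset.filter_true_of_mem
      intro i _
      calc z i ≤ ((z i).toNat : ℤ) := Int.self_le_toNat _
        _ ≤ _ := by
            exact_mod_cast Nat.cast_le.mpr (Finset.le_sup (f := fun i => (z i).toNat)
              (Finset.mem_univ i))
    rw [this, Finset.card_univ, Fintype.card_fin]
    omega
  set lam : ℕ := Nat.find hexlam with hlamdef
  have hPlam : m ≤ (Finset.univ.filter (fun i => z i ≤ (lam : ℤ))).card := Nat.find_spec hexlam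
  set lz : ℤ := (lam : ℤ) with hlzdef
  have hlowcard : (Finset.univ.filter (fun i => z i < lz)).card ≤ m - 1 := by
    rcases Nat.eq_zero_or_pos lam with h0 | hpos
    · have : Finset.univ.filter (fun i => z i < lz) = ∅ := by
        apply Finset.filter_false_of_mem
        intro i _
        have h1 := hz0 i
        omega
      rw [this]
      simp
    · have hnot' := Nat.find_min hexlam (show lam - 1 < lam by omega)
      push_neg at hnot'
      have heq : Finset.univ.filter (fun i => z i < lz)
          = Finset.univ.filter (fun i => z i ≤ ((lam - 1 : ℕ) : ℤ)) := by
        apply Finset.filter_congr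
        intro i _
        have : ((lam - 1 : ℕ) : ℤ) = lz - 1 := by
          rw [hlzdef]; push_cast [Nat.cast_sub hpos]; ring
        rw [this]
        constructor <;> intro h <;> omega
      rw [heq]
      omega
  have hhighcard : (Finset.univ.filter (fun i => lz < z i)).card ≤ m - 1 := by
    by_contra hc
    push_neg at hc
    have hc' : m ≤ (Finset.univ.filter (fun i => lz < z i)).card := by omega
    obtain ⟨S1, hS1sub, hS1card⟩ := Finset.exists_subset_card_eq hc'
    obtain ⟨S2, hS2sub, hS2card⟩ := Finset.exists_subset_card_eq hPlam
    have hsum1 : (m : ℤ) * (lz + 1) ≤ ∑ i ∈ S1, z i := by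
      have := Finset.card_nsmul_le_sum S1 z (lz + 1) (fun i hi => by
        have := hS1sub hi
        simp only [Finset.mem_filter] at this
        omega)
      rw [hS1card] at this
      simpa [nsmul_eq_mul] using this
    have hsum2 : ∑ i ∈ S2, z i ≤ (m : ℤ) * lz := by
      have := Finset.sum_le_card_nsmul S2 z lz (fun i hi => by
        have := hS2sub hi
        simp only [Finset.mem_filter] at this
        omega)
      rw [hS2card] at this
      simpa [nsmul_eq_mul] using this
    have := width S2 S1 hS2card hS1card
    have hm' : (2 : ℤ) ≤ (m : ℤ) := by exact_mod_cast hm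
    nlinarith
  -- Step 5 : quantities
  set Pp : Finset (Fin n) := Finset.univ.filter (fun i => lz < z i) with hPp
  set Pm : Finset (Fin n) := Finset.univ.filter (fun i => z i < lz) with hPm
  set Ep : ℤ := ∑ i ∈ Pp, (z i - lz) with hEp
  set Em : ℤ := ∑ i ∈ Pm, (lz - z i) with hEm
  set F : ℤ := ∑ i, (z i - lz) ^ 2 with hF
  have hEp0 : 0 ≤ Ep := Finset.sum_nonneg (fun i hi => by
    rw [hPp] at hi; simp only [Finset.mem_filter] at hi; omega)
  have hEm0 : 0 ≤ Em := Finset.sum_nonneg (fun i hi => by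
    rw [hPm] at hi; simp only [Finset.mem_filter] at hi; omega)
  have hsum_e : ∑ i, (z i - lz) = Ep - Em := by
    have hterm : ∀ i : Fin n, z i - lz =
        (if lz < z i then z i - lz else 0) - (if z i < lz then lz - z i else 0) := by
      intro i; split_ifs <;> omega
    rw [Finset.sum_congr rfl (fun i _ => hterm i), Finset.sum_sub_distrib]
    rw [hEp, hEm, hPp, hPm, Finset.sum_filter, Finset.sum_filter]
  have hFge : Ep + Em ≤ F := by
    rw [hEp, hEm, hF, hPp, hPm, Finset.sum_filter, Finset.sum_filter, ← Finset.sum_add_distrib]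
    apply Finset.sum_le_sum
    intro i _
    split_ifs with h1 h2 <;>
      nlinarith [sq_nonneg (z i - lz - 1), sq_nonneg (z i - lz + 1), sq_nonneg (z i - lz)]
  have hFpar : (F - Ep - Em) % 2 = 0 := by
    have hdvd : 2 ∣ F - Ep - Em := by
      have hid : F - Ep - Em = ∑ i, ((z i - lz) ^ 2 -
          ((if lz < z i then z i - lz else 0) + (if z i < lz then lz - z i else 0))) := by
        rw [Finset.sum_sub_distrib, Finset.sum_add_distrib]
        rw [hF, hEp, hEm, hPp, hPm, Finset.sum_filter, Finset.sum_filter]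
        ring
      rw [hid]
      apply Finset.dvd_sum
      intro i _
      split_ifs with h1 h2
      · omega
      · have := par2 (z i - lz); omega
      · have := par2' (z i - lz); omega
      · have := par2 (z i - lz); omega
    omega
  -- Step 6/7 : the two extremal m-subsets
  have hcover : n ≤ Pp.card + Pm.card + (Finset.univ.filter (fun i => z i = lz)).card := by
    have hsub : (Finset.univ : Finset (Fin n)) ⊆
        Pp ∪ Pm ∪ Finset.univ.filter (fun i => z i = lz) := by
      intro i _
      simp only [Finset.mem_union, hPp, hPm, Finset.mem_filter, Finset.mem_univ, true_and]
      omega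
    calc n = (Finset.univ : Finset (Fin n)).card := by rw [Finset.card_univ, Fintype.card_fin]
      _ ≤ _ := Finset.card_le_card hsub
      _ ≤ _ := le_trans (Finset.card_union_le _ _)
          (add_le_add_left (Finset.card_union_le _ _) _)
  have hTpcard : m - Pp.card ≤ (Finset.univ.filter (fun i => z i = lz)).card := by omega
  have hTmcard : m - Pm.card ≤ (Finset.univ.filter (fun i => z i = lz)).card := by omega
  obtain ⟨Tp, hTpsub, hTpc⟩ := Finset.exists_subset_card_eq hTpcard
  obtain ⟨Tm, hTmsub, hTmc⟩ := Finset.exists_subset_card_eq hTmcard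
  have hdisjp : Disjoint Pp Tp := by
    rw [Finset.disjoint_left]
    intro i hip hit
    have h1 := hTpsub hit
    rw [hPp] at hip
    simp only [Finset.mem_filter] at h1 hip
    omega
  have hdisjm : Disjoint Pm Tm := by
    rw [Finset.disjoint_left]
    intro i hip hit
    have h1 := hTmsub hit
    rw [hPm] at hip
    simp only [Finset.mem_filter] at h1 hip
    omega
  have hSpcard : (Pp ∪ Tp).card = m := by
    rw [Finset.card_union_of_disjoint hdisjp, hTpc]
    omega
  have hSmcard : (Pm ∪ Tm).card = m := by
    rw [Finset.card_union_of_disjoint hdisjm, hTmc]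
    omega
  have hSpsum : ∑ i ∈ Pp ∪ Tp, (z i - lz) = Ep := by
    rw [Finset.sum_union hdisjp]
    have hz0' : ∑ i ∈ Tp, (z i - lz) = 0 := Finset.sum_eq_zero (fun i hi => by
      have := hTpsub hi
      simp only [Finset.mem_filter] at this
      omega)
    rw [hz0', add_zero, hEp]
  have hSmsum : ∑ i ∈ Pm ∪ Tm, (z i - lz) = -Em := by
    rw [Finset.sum_union hdisjm]
    have hz0' : ∑ i ∈ Tm, (z i - lz) = 0 := Finset.sum_eq_zero (fun i hi => by
      have := hTmsub hi
      simp only [Finset.mem_filter] at this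
      omega)
    rw [hz0', add_zero, hEm, hPm, ← Finset.sum_neg_distrib]
    apply Finset.sum_congr rfl
    intro i _
    ring
  -- Step 8 : the two key equations
  set a : ℝ := y i₀ + (lz : ℝ) with ha
  have hya : ∀ i, y i = a + ((z i - lz : ℤ) : ℝ) := by
    intro i; rw [hyz i, ha]; push_cast; ring
  have hcastsum : ((∑ i, (z i - lz) : ℤ) : ℝ) = ((Ep : ℤ) : ℝ) - ((Em : ℤ) : ℝ) := by
    rw [hsum_e]; push_cast; ring
  have hna : (n : ℝ) * a = ((m : ℝ) + ((Em : ℤ) : ℝ) - ((Ep : ℤ) : ℝ)) := by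
    have h1 : ∑ i, y i = n * a + ((∑ i, (z i - lz) : ℤ) : ℝ) := by
      rw [Finset.sum_congr rfl (fun i _ => hya i), Finset.sum_add_distrib, Finset.sum_const,
        Finset.card_univ, Fintype.card_fin]
      rw [nsmul_eq_mul]
      push_cast
      ring
    rw [hyH', hcastsum] at h1
    linarith
  have hsumsq : ∑ i, (y i) ^ 2 =
      n * a ^ 2 + 2 * a * (((Ep : ℤ) : ℝ) - ((Em : ℤ) : ℝ)) + ((F : ℤ) : ℝ) := by
    have hterm : ∀ i : Fin n, (y i) ^ 2 =
        a ^ 2 + 2 * a * ((z i - lz : ℤ) : ℝ) + (((z i - lz) ^ 2 : ℤ) : ℝ) := by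
      intro i; rw [hya i]; push_cast; ring
    rw [Finset.sum_congr rfl (fun i _ => hterm i), Finset.sum_add_distrib,
      Finset.sum_add_distrib, Finset.sum_const, Finset.card_univ, Fintype.card_fin,
      ← Finset.mul_sum]
    have e1 : ∑ i, ((z i - lz : ℤ) : ℝ) = ((Ep : ℤ) : ℝ) - ((Em : ℤ) : ℝ) := by
      rw [← hcastsum]
      push_cast
      ring
    have e2 : ∑ i, (((z i - lz) ^ 2 : ℤ) : ℝ) = ((F : ℤ) : ℝ) := by
      rw [hF]
      push_cast
      ring
    rw [e1, e2, nsmul_eq_mul]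
  have key : ∀ S : Finset (Fin n), S.card = m → ∀ k : ℕ,
      ((∑ i, (y i) ^ 2) + m - 2 * ∑ i ∈ S, y i = 2 * k) →
      (n : ℤ) * (F + m - 2 * (∑ i ∈ S, (z i - lz)) - 2 * (k : ℤ)) = (m + Em - Ep) ^ 2 := by
    intro S hScard k hk
    have hsS : ∑ i ∈ S, y i = m * a + ((∑ i ∈ S, (z i - lz) : ℤ) : ℝ) := by
      rw [Finset.sum_congr rfl (fun i _ => hya i), Finset.sum_add_distrib, Finset.sum_const,
        hScard, nsmul_eq_mul]
      push_cast
      ring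
    rw [hsumsq, hsS] at hk
    have goalR : (n : ℝ) * (((F : ℤ) : ℝ) + m - 2 * ((∑ i ∈ S, (z i - lz) : ℤ) : ℝ)
        - 2 * (k : ℝ)) = ((m : ℝ) + ((Em : ℤ) : ℝ) - ((Ep : ℤ) : ℝ)) ^ 2 := by
      linear_combination (n : ℝ) * hk
        - ((n : ℝ) * a - ((m : ℝ) + ((Em : ℤ) : ℝ) - ((Ep : ℤ) : ℝ))) * hna
    have goalZ : ((n : ℤ) : ℝ) * ((F + m - 2 * (∑ i ∈ S, (z i - lz)) - 2 * (k : ℤ) : ℤ) : ℝ)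
        = (((m + Em - Ep : ℤ) : ℝ)) ^ 2 := by
      push_cast
      push_cast at goalR
      linarith [goalR]
    exact_mod_cast goalZ
  obtain ⟨kp, hkp1, hkpm, ekp⟩ := ky _ hSpcard
  obtain ⟨km', hkm1, hkmm, ekm⟩ := ky _ hSmcard
  have heq1 := key _ hSpcard kp ekp
  have heq2 := key _ hSmcard km' ekm
  rw [hSpsum] at heq1
  rw [hSmsum] at heq2
  have heq2' : (n : ℤ) * (F + m + 2 * Em - 2 * (km' : ℤ)) = (m + Em - Ep) ^ 2 := by
    rw [← heq2]; ring_nf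
  exact endgame m n hm hn Ep Em F (m + Em - Ep) (F + m - 2 * Ep - 2 * (kp : ℤ)) kp km'
    hEp0 hEm0 rfl (by exact_mod_cast hkp1) (by exact_mod_cast hkpm)
    (by exact_mod_cast hkm1) (by exact_mod_cast hkmm) rfl heq1 heq2' hFge hFpar

end JProof

namespace JProof
variable {m : ℕ}
open Finset

lemma not_maximal_witness (hm : 2 ≤ m) :
    ¬ JohnsonRepMaximal ((2 * (2 * (m + 1) / 3) - 1) ^ 2) m := by
  set h : ℕ := 2 * (2 * (m + 1) / 3) - 1 with hh
  set nn : ℕ := h ^ 2 with hnn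
  have h3 : 3 ≤ h := by omega
  have hmh : m ≤ h := by omega
  have h3δ : 3 * (h - m) ≤ m + 1 := by omega
  have hodd : h % 2 = 1 := by omega
  set δ : ℕ := h - m with hδ
  have hhn : 3 * h ≤ nn := by rw [hnn, pow_two]; exact Nat.mul_le_mul_right h h3
  have hδn : δ < nn := by omega
  have hn2m : 2 * m ≤ nn := by omega
  -- the added point
  set low : Finset (Fin nn) := (Finset.range δ).attachFin
    (fun a ha => by simp only [Finset.mem_range] at ha; omega) with hlow
  have hlowcard : low.card = δ := by
    rw [hlow, Finset.card_attachFin, Finset.card_range]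
  set y : EuclideanSpace ℝ (Fin nn) :=
    WithLp.toLp 2 (fun i => if i ∈ low then 1 / (h : ℝ) - 1 else 1 / (h : ℝ)) with hy
  have hhR : (h : ℝ) ≠ 0 := by positivity
  have hδR : (δ : ℝ) = (h : ℝ) - m := by
    rw [hδ]; push_cast [Nat.cast_sub hmh]; ring
  have hnR : ((nn : ℕ) : ℝ) = (h : ℝ) ^ 2 := by rw [hnn]; push_cast; ring
  have hsplit : ∀ i : Fin nn, y i = 1 / (h : ℝ) + (if i ∈ low then (-1 : ℝ) else 0) := by
    intro i
    by_cases hi : i ∈ low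
    · simp [hy, hi]; ring
    · simp [hy, hi]
  have hsum : ∑ i, y i = (m : ℝ) := by
    rw [Finset.sum_congr rfl (fun i _ => hsplit i), Finset.sum_add_distrib]
    rw [Finset.sum_const, Finset.card_univ, Fintype.card_fin]
    rw [Finset.sum_ite_mem, Finset.univ_inter, Finset.sum_const, hlowcard]
    simp only [nsmul_eq_mul]
    rw [hnR, hδR]
    field_simp
    ring
  have hsumsq : ∑ i, (y i) ^ 2 = 1 + (δ : ℝ) - 2 * δ / h := by
    have : ∀ i : Fin nn, (y i) ^ 2 =
        1 / (h : ℝ) ^ 2 + (if i ∈ low then (1 - 2 / (h : ℝ)) else 0) := by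
      intro i
      by_cases hi : i ∈ low
      · simp [hy, hi]; field_simp; ring
      · simp [hy, hi]
    rw [Finset.sum_congr rfl (fun i _ => this i), Finset.sum_add_distrib]
    rw [Finset.sum_const, Finset.card_univ, Fintype.card_fin]
    rw [Finset.sum_ite_mem, Finset.univ_inter, Finset.sum_const, hlowcard]
    simp only [nsmul_eq_mul]
    rw [hnR]
    field_simp
    ring
  have hyJ : y ∉ JohnsonRep nn m := by
    intro ⟨h01, _⟩
    have hi : (⟨δ, hδn⟩ : Fin nn) ∉ low := by
      rw [hlow, Finset.mem_attachFin]
      simp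
    have := h01 ⟨δ, hδn⟩
    rw [hy] at this
    simp only [hi, if_false] at this
    have h3R : (3 : ℝ) ≤ (h : ℝ) := by exact_mod_cast h3
    have hpos : (0 : ℝ) < 1 / (h : ℝ) := by positivity
    have hlt : 1 / (h : ℝ) < 1 := by
      rw [div_lt_one (by linarith)]; linarith
    rcases this with h0 | h1
    · linarith
    · linarith
  have hdist : ∀ A : Finset (Fin nn), A.card = m → dist y (jp A) ∈ Dset m := by
    intro A hA
    set j : ℕ := (A ∩ low).card with hj
    have hjδ : j ≤ δ := by
      rw [hj, ← hlowcard]; exact Finset.card_le_card Finset.inter_subset_right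
    have hsumA : ∑ i ∈ A, y i = (m : ℝ) / h - j := by
      rw [Finset.sum_congr rfl (fun i _ => hsplit i), Finset.sum_add_distrib]
      rw [Finset.sum_const, hA, Finset.sum_ite_mem, Finset.sum_const, hj]
      push_cast
      ring
    have hd2 : dist y (jp A) ^ 2 = (h : ℝ) - 1 + 2 * j := by
      rw [dist_y_jp, hsumsq, hsumA, hA]
      have hmδh : (m : ℝ) + δ = h := by rw [hδR]; ring
      field_simp
      nlinarith [hmδh]
    set k : ℕ := (h - 1) / 2 + j with hk
    have h2k : 2 * k = h - 1 + 2 * j := by omega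
    have hk1 : 1 ≤ k := by omega
    have hkm : k ≤ m := by omega
    refine ⟨k, ⟨hk1, hkm⟩, ?_⟩
    symm
    apply dist_eq_sqrt
    rw [hd2]
    have : ((2 * k : ℕ) : ℝ) = (h : ℝ) - 1 + 2 * j := by
      rw [h2k]; push_cast [Nat.cast_sub (by omega : 1 ≤ h)]; ring
    push_cast at this ⊢
    linarith
  intro hmax
  exact hmax ⟨y, ⟨hsum, hyJ⟩, isSDist_of (by omega) hn2m hdist⟩

end JProof

theorem max_n_not_maximal (m : ℕ) (hm : 2 ≤ m) :
    {n : ℕ | 2 * m ≤ n ∧ ¬ JohnsonRepMaximal n m}.Nonempty ∧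
    IsGreatest {n : ℕ | 2 * m ≤ n ∧ ¬ JohnsonRepMaximal n m}
      ((2 * (2 * (m + 1) / 3) - 1) ^ 2) := by
  have hmem : (2 * (2 * (m + 1) / 3) - 1) ^ 2 ∈
      {n : ℕ | 2 * m ≤ n ∧ ¬ JohnsonRepMaximal n m} := by
    constructor
    · have h1 : m ≤ 2 * (2 * (m + 1) / 3) - 1 := by omega
      calc 2 * m ≤ m * m := by nlinarith
        _ ≤ _ := by rw [pow_two]; exact Nat.mul_le_mul h1 h1
    · exact JProof.not_maximal_witness hm
  exact ⟨⟨_, hmem⟩, hmem, fun n hn => JProof.upper hm hn.1 hn.2⟩
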